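/- Let x₀ ≥ 0, let Z : [0,∞) → (0,∞) be continuous, let u : [0,∞) → [0,∞) be locally integrable, and let x : [0,∞) → ℝ be continuous and satisfy, for every t ≥ 0, x(t) = x₀·Z(t) + ∫₀ᵗ (Z(t)/Z(s))·(u(s) + x(s)²/(1 + x(s)²)) ds. Define M(t) = ∫₀ᵗ (Z(t)/Z(s)) ds and M_t(u) = ∫₀ᵗ (Z(t)/Z(s))·u(s) ds. Then for all t ≥ 0, x(t)² ≥ x₀²·Z(t)² + 2x₀·Z(t)·M(t) + 2x₀·Z(t)·M_t(u) − ∫₀ᵗ (Z(t)/Z(s))² ds. -/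

import Mathlib

open Real Set MeasureTheory intervalIntegral

/-- Pathwise lower bound for the squared state of the shallow lake dynamics. -/
theorem shallow_lake_squared_state_lower_bound
    (x₀ : ℝ) (hx₀ : 0 ≤ x₀)
    (Z : ℝ → ℝ) (hZcont : ContinuousOn Z (Ici 0)) (hZpos : ∀ t ∈ Ici (0:ℝ), 0 < Z t)
    (u : ℝ → ℝ) (hu_nonneg : ∀ t ∈ Ici (0:ℝ), 0 ≤ u t)
    (hu_loc : LocallyIntegrableOn u (Ici 0))
    (x : ℝ → ℝ) (hx_cont : ContinuousOn x (Ici 0))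
    (hx_eq : ∀ t ∈ Ici (0:ℝ),
      x t = x₀ * Z t + ∫ s in (0:ℝ)..t, (Z t / Z s) * (u s + x s ^ 2 / (1 + x s ^ 2)))
    (M : ℝ → ℝ) (hM : ∀ t, M t = ∫ s in (0:ℝ)..t, Z t / Z s)
    (Mu : ℝ → ℝ) (hMu : ∀ t, Mu t = ∫ s in (0:ℝ)..t, (Z t / Z s) * u s) :
    ∀ t ∈ Ici (0:ℝ),
      x t ^ 2 ≥ x₀ ^ 2 * Z t ^ 2 + 2 * x₀ * Z t * M t + 2 * x₀ * Z t * Mu t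
        - ∫ s in (0:ℝ)..t, (Z t / Z s) ^ 2 := by
  intro t ht
  have ht0 : (0:ℝ) ≤ t := ht
  set f : ℝ → ℝ := fun s => x s ^ 2 / (1 + x s ^ 2) with hf
  have hIcc : Icc (0:ℝ) t ⊆ Ici 0 := fun s hs => hs.1
  have hxden : ∀ s, 0 < 1 + x s ^ 2 := fun s => by positivity
  have hZc : ContinuousOn (fun s => Z t / Z s) (Icc 0 t) :=
    continuousOn_const.div (hZcont.mono hIcc) (fun s hs => (hZpos s (hIcc hs)).ne')
  have hfc : ContinuousOn f (Icc 0 t) :=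
    ((hx_cont.mono hIcc).pow 2).div
      (continuousOn_const.add ((hx_cont.mono hIcc).pow 2)) (fun s _ => (hxden s).ne')
  -- integrability facts on [0, t]
  have hu_int : IntervalIntegrable u volume 0 t := by
    rw [intervalIntegrable_iff_integrableOn_Ioc_of_le ht0]
    exact (hu_loc.integrableOn_compact_subset hIcc isCompact_Icc).mono_set Ioc_subset_Icc_self
  have hZu_int : IntervalIntegrable (fun s => Z t / Z s * u s) volume 0 t :=
    hu_int.continuousOn_mul (by rwa [uIcc_of_le ht0])
  have hZf_int : IntervalIntegrable (fun s => Z t / Z s * f s) volume 0 t :=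
    (hZc.mul hfc).intervalIntegrable_of_Icc ht0
  have hZ2_int : IntervalIntegrable (fun s => (Z t / Z s) ^ 2) volume 0 t :=
    (hZc.pow 2).intervalIntegrable_of_Icc ht0
  have hZ_int : IntervalIntegrable (fun s => Z t / Z s) volume 0 t :=
    hZc.intervalIntegrable_of_Icc ht0
  have hZsub_int : IntervalIntegrable
      (fun s => 2 * x₀ * Z t * (Z t / Z s) - 2 * x₀ * Z t * (Z t / Z s * f s)) volume 0 t :=
    (hZ_int.const_mul _).sub (hZf_int.const_mul _)
  -- pathwise lower bound x s ≥ x₀ Z s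
  have hxlb : ∀ s ∈ Ici (0:ℝ), x₀ * Z s ≤ x s := by
    intro s hs
    rw [hx_eq s hs]
    have h0 : 0 ≤ ∫ r in (0:ℝ)..s, (Z s / Z r) * (u r + x r ^ 2 / (1 + x r ^ 2)) := by
      apply intervalIntegral.integral_nonneg hs
      intro r hr
      have hr0 : (0:ℝ) ≤ r := hr.1
      exact mul_nonneg (div_nonneg (hZpos s hs).le (hZpos r hr0).le)
        (add_nonneg (hu_nonneg r hr0) (div_nonneg (sq_nonneg _) (hxden r).le))
    linarith
  -- split the integral
  have hsplit : (∫ s in (0:ℝ)..t, (Z t / Z s) * (u s + f s))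
      = (∫ s in (0:ℝ)..t, Z t / Z s * u s) + ∫ s in (0:ℝ)..t, Z t / Z s * f s := by
    rw [← intervalIntegral.integral_add hZu_int hZf_int]
    apply intervalIntegral.integral_congr
    intro s _
    simp [mul_add]
  -- key comparison of integrals
  have hmono : (∫ s in (0:ℝ)..t,
        (2 * x₀ * Z t * (Z t / Z s) - 2 * x₀ * Z t * (Z t / Z s * f s)))
      ≤ ∫ s in (0:ℝ)..t, (Z t / Z s) ^ 2 := by
    apply intervalIntegral.integral_mono_on ht0 hZsub_int hZ2_int
    intro s hs
    have hs0 : (0:ℝ) ≤ s := hs.1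
    have hZs := hZpos s hs0
    have hZt := hZpos t ht
    have hxs := hxlb s hs0
    have h1 : 2 * (x₀ * Z s) ≤ 1 + x s ^ 2 := by
      nlinarith [sq_nonneg (1 - x s), mul_nonneg hx₀ hZs.le]
    have hZdiv : 0 < Z t / Z s := div_pos hZt hZs
    have hkey : 2 * x₀ * Z t * (1 - f s) ≤ Z t / Z s := by
      have h1f : 1 - f s = 1 / (1 + x s ^ 2) := by
        rw [hf]; field_simp; ring
      rw [h1f, mul_one_div, div_le_div_iff₀ (hxden s) hZs]
      nlinarith [mul_nonneg (mul_nonneg hx₀ hZt.le) hZs.le, hZt.le]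
    nlinarith [mul_le_mul_of_nonneg_left hkey hZdiv.le]
  set A := ∫ s in (0:ℝ)..t, Z t / Z s * u s with hA_def
  set B := ∫ s in (0:ℝ)..t, Z t / Z s * f s with hB_def
  have hxeq : x t = x₀ * Z t + (A + B) := by rw [hx_eq t ht, hsplit]
  have hA : 0 ≤ A := by
    apply intervalIntegral.integral_nonneg ht0
    intro s hs
    exact mul_nonneg (div_nonneg (hZpos t ht).le (hZpos s hs.1).le) (hu_nonneg s hs.1)
  have hB : 0 ≤ B := by
    apply intervalIntegral.integral_nonneg ht0
    intro s hs
    exact mul_nonneg (div_nonneg (hZpos t ht).le (hZpos s hs.1).le)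
      (div_nonneg (sq_nonneg _) (hxden s).le)
  have hintsub : (∫ s in (0:ℝ)..t,
        (2 * x₀ * Z t * (Z t / Z s) - 2 * x₀ * Z t * (Z t / Z s * f s)))
      = 2 * x₀ * Z t * M t - 2 * x₀ * Z t * B := by
    rw [intervalIntegral.integral_sub (hZ_int.const_mul _) (hZf_int.const_mul _),
      intervalIntegral.integral_const_mul, intervalIntegral.integral_const_mul, hM]
  rw [hintsub] at hmono
  have hMuA : Mu t = A := hMu t
  have hxZ : 0 ≤ x₀ * Z t := mul_nonneg hx₀ (hZpos t ht).le
  rw [ge_iff_le, hxeq, hMuA]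
  nlinarith [sq_nonneg (A + B), hA, hB, hmono, hxZ]
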